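/- Let c ∈ [0,1] and let X_c be the unique integrable solution of X_c = ((1-2c)U+c)^2 X_c' + ((2c-1)U+1-c)^2 X_c'' + T(c,U), where T(c,u) = ((1-c)/2)(u^2+(1-u)^2) + c·u(1-u), U is uniform on [0,1], and X_c', X_c'' are independent copies independent of U. Then E[X_c] = (2-c)/(2(1+2c-2c^2)) and Var(X_c) = (1-c)^2(1-2c)^2 / (4(1+2c-2c^2)^2 (3+6c-8c^2+4c^3-2c^4)). -/

import Mathlib

open MeasureTheory ProbabilityTheory intervalIntegral

lemma int01 (p0 p1 p2 p3 p4 : ℝ) :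
    ∫ x in Set.Icc (0:ℝ) 1, (p0 + p1*x + p2*x^2 + p3*x^3 + p4*x^4) =
      p0 + p1/2 + p2/3 + p3/4 + p4/5 := by
  rw [MeasureTheory.integral_Icc_eq_integral_Ioc,
    ← intervalIntegral.integral_of_le (zero_le_one' ℝ)]
  have h : ∀ (n : ℕ) (q : ℝ), IntervalIntegrable (fun x : ℝ => q * x ^ n) volume 0 1 :=
    fun n q => ((continuous_const.mul (continuous_pow n)).intervalIntegrable 0 1)
  have hmul : ∀ (n : ℕ) (q : ℝ), ∫ x in (0:ℝ)..1, q * x ^ n = q / (n+1) := by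
    intro n q
    rw [intervalIntegral.integral_const_mul, integral_pow]
    simp
    ring
  have e : ∀ x : ℝ, p0 + p1*x + p2*x^2 + p3*x^3 + p4*x^4
      = p0 + (p1*x^1 + (p2*x^2 + (p3*x^3 + p4*x^4))) := by intro x; ring
  simp only [e]
  rw [intervalIntegral.integral_add intervalIntegrable_const
      (((h 1 p1).add ((h 2 p2).add ((h 3 p3).add (h 4 p4))))),
    intervalIntegral.integral_add (h 1 p1) ((h 2 p2).add ((h 3 p3).add (h 4 p4))),
    intervalIntegral.integral_add (h 2 p2) ((h 3 p3).add (h 4 p4)),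
    intervalIntegral.integral_add (h 3 p3) (h 4 p4),
    hmul 1 p1, hmul 2 p2, hmul 3 p3, hmul 4 p4]
  simp
  ring

lemma min_add3 (y1 y2 y3 n : ℝ) (h1 : 0 ≤ y1) (h2 : 0 ≤ y2) (h3 : 0 ≤ y3) (hn : 0 ≤ n) :
    min (y1+y2+y3) n ≤ min y1 n + min y2 n + min y3 n := by
  rcases le_total y1 n with a|a <;> rcases le_total y2 n with b|b <;>
    rcases le_total y3 n with d|d <;>
    simp only [min_eq_left, min_eq_right, a, b, d, min_def] <;> split_ifs <;> linarith

lemma phi_key (n y1 y2 y3 : ℝ) (h1 : 0 ≤ y1) (h2 : 0 ≤ y2) (h3 : 0 ≤ y3) (hn : 0 ≤ n) :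
    (y1+y2+y3) * min (y1+y2+y3) n ≤
      y1 * min y1 n + y2 * min y2 n + y3 * min y3 n + 2*(y1*y2+y1*y3+y2*y3) := by
  have hs : 0 ≤ y1+y2+y3 := by linarith
  have h4 := min_add3 y1 y2 y3 n h1 h2 h3 hn
  have h5 : (y1+y2+y3) * min (y1+y2+y3) n
      ≤ (y1+y2+y3) * (min y1 n + min y2 n + min y3 n) :=
    mul_le_mul_of_nonneg_left h4 hs
  have m1 := min_le_left y1 n
  have m2 := min_le_left y2 n
  have m3 := min_le_left y3 n
  nlinarith [mul_le_mul_of_nonneg_left m2 h1, mul_le_mul_of_nonneg_left m1 h2,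
    mul_le_mul_of_nonneg_left m3 h1, mul_le_mul_of_nonneg_left m1 h3,
    mul_le_mul_of_nonneg_left m3 h2, mul_le_mul_of_nonneg_left m2 h3]

lemma phi_scale (a x n : ℝ) (ha0 : 0 ≤ a) (ha1 : a ≤ 1) (hx : 0 ≤ x) :
    (a*x) * min (a*x) n ≤ a * (x * min x n) := by
  have h1 : min (a*x) n ≤ min x n := min_le_min (by nlinarith) le_rfl
  calc (a*x) * min (a*x) n ≤ (a*x) * min x n :=
        mul_le_mul_of_nonneg_left h1 (mul_nonneg ha0 hx)
    _ = a * (x * min x n) := by ring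

lemma phi_sup (y : ℝ) :
    (⨆ n : ℕ, ENNReal.ofReal (|y| * min |y| (n:ℝ))) = ENNReal.ofReal (y^2) := by
  apply le_antisymm
  · refine iSup_le fun n => ENNReal.ofReal_le_ofReal ?_
    nlinarith [min_le_left |y| (n:ℝ), abs_nonneg y, abs_mul_abs_self y]
  · refine le_iSup_of_le ⌈|y|⌉₊ (ENNReal.ofReal_le_ofReal ?_)
    rw [min_eq_left (Nat.le_ceil |y|)]
    nlinarith [abs_mul_abs_self y]

set_option maxHeartbeats 4000000 in
theorem quicksort_case1_limit_moments {Ω : Type*} [MeasurableSpace Ω] (P : Measure Ω)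
    [IsProbabilityMeasure P] (c : ℝ) (hc : c ∈ Set.Icc (0:ℝ) 1)
    (U X X' X'' : Ω → ℝ)
    (hUm : Measurable U) (hXm : Measurable X) (hX'm : Measurable X')
    (hX''m : Measurable X'')
    (hU : Measure.map U P = volume.restrict (Set.Icc (0:ℝ) 1))
    (hX' : Measure.map X' P = Measure.map X P)
    (hX'' : Measure.map X'' P = Measure.map X P)
    (hindep : iIndepFun ![X', X'', U] P)
    (hXint : Integrable X P)
    (heq : Measure.map X P = Measure.map (fun ω =>
      ((1 - 2*c) * U ω + c)^2 * X' ω + ((2*c - 1) * U ω + (1 - c))^2 * X'' ω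
        + ((1 - c)/2 * ((U ω)^2 + (1 - U ω)^2) + c * U ω * (1 - U ω))) P) :
    ∫ ω, X ω ∂P = (2 - c) / (2 * (1 + 2*c - 2*c^2))
    ∧ variance X P =
        (1 - c)^2 * (1 - 2*c)^2
          / (4 * (1 + 2*c - 2*c^2)^2 * (3 + 6*c - 8*c^2 + 4*c^3 - 2*c^4)) := by
  obtain ⟨hc0, hc1⟩ := hc
  set F : Ω → ℝ := fun ω =>
      ((1 - 2*c) * U ω + c)^2 * X' ω + ((2*c - 1) * U ω + (1 - c))^2 * X'' ω
        + ((1 - c)/2 * ((U ω)^2 + (1 - U ω)^2) + c * U ω * (1 - U ω)) with hFdef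
  have hFapp : ∀ ω, F ω =
      ((1 - 2*c) * U ω + c)^2 * X' ω + ((2*c - 1) * U ω + (1 - c))^2 * X'' ω
        + ((1 - c)/2 * ((U ω)^2 + (1 - U ω)^2) + c * U ω * (1 - U ω)) :=
    fun ω => by rw [hFdef]
  -- measurability of the three coefficient functions of U
  have hg1m : Measurable (fun x : ℝ => ((1 - 2*c)*x + c)^2) := by fun_prop
  have hg2m : Measurable (fun x : ℝ => ((2*c - 1)*x + (1 - c))^2) := by fun_prop
  have hg3m : Measurable (fun x : ℝ => (1 - c)/2 * (x^2 + (1 - x)^2) + c * x * (1 - x)) := by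
    fun_prop
  have hFm : Measurable F := by
    rw [hFdef]; fun_prop
  -- independence
  have hmeas3 : ∀ i, Measurable (![X', X'', U] i) := by
    intro i; fin_cases i <;> simpa
  have hIX'U : IndepFun X' U P := hindep.indepFun (show (0:Fin 3) ≠ 2 by decide)
  have hIX''U : IndepFun X'' U P := hindep.indepFun (show (1:Fin 3) ≠ 2 by decide)
  have hIX'X'' : IndepFun X' X'' P := hindep.indepFun (show (0:Fin 3) ≠ 1 by decide)
  have hIpairU : IndepFun (fun ω => (X' ω, X'' ω)) U P :=
    hindep.indepFun_prodMk hmeas3 0 1 2 (by decide) (by decide)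
  -- moments of functions of U
  have hmomU : ∀ g : ℝ → ℝ, Measurable g →
      ∫ ω, g (U ω) ∂P = ∫ x in Set.Icc (0:ℝ) 1, g x := by
    intro g hg
    have h1 : ∫ y, g y ∂(Measure.map U P) = ∫ ω, g (U ω) ∂P :=
      integral_map hUm.aemeasurable hg.aestronglyMeasurable
    rw [← h1, hU]
  -- product rule for a function of U times a function independent of U
  have hprodU : ∀ (g : ℝ → ℝ) (h : Ω → ℝ), Measurable g → Measurable h →
      IndepFun h U P →
      ∫ ω, g (U ω) * h ω ∂P = (∫ ω, g (U ω) ∂P) * ∫ ω, h ω ∂P := by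
    intro g h hg hh hi
    have h1 : IndepFun (fun ω => g (U ω)) h P := hi.symm.comp hg measurable_id
    calc ∫ ω, g (U ω) * h ω ∂P = ∫ ω, ((fun ω => g (U ω)) * h) ω ∂P := rfl
      _ = (∫ ω, g (U ω) ∂P) * ∫ ω, h ω ∂P :=
        h1.integral_mul_eq_mul_integral ((hg.comp hUm).aestronglyMeasurable) hh.aestronglyMeasurable
  -- transfers along equal laws
  have htrans : ∀ (Y : Ω → ℝ), Measurable Y → Measure.map Y P = Measure.map X P →
      ∀ (f : ℝ → ℝ), Measurable f → ∫ ω, f (Y ω) ∂P = ∫ ω, f (X ω) ∂P := by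
    intro Y hY hl f hf
    have h1 : ∫ y, f y ∂(Measure.map Y P) = ∫ ω, f (Y ω) ∂P :=
      integral_map hY.aemeasurable hf.aestronglyMeasurable
    have h2 : ∫ y, f y ∂(Measure.map X P) = ∫ ω, f (X ω) ∂P :=
      integral_map hXm.aemeasurable hf.aestronglyMeasurable
    rw [← h1, ← h2, hl]
  have hinttr : ∀ (Y : Ω → ℝ), Measurable Y → Measure.map Y P = Measure.map X P →
      ∀ (f : ℝ → ℝ), Measurable f → Integrable (fun ω => f (X ω)) P →
      Integrable (fun ω => f (Y ω)) P := by
    intro Y hY hl f hf hi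
    have h1 : Integrable f (Measure.map X P) :=
      (integrable_map_measure hf.aestronglyMeasurable hXm.aemeasurable).2 hi
    have h2 : Integrable f (Measure.map Y P) := by rw [hl]; exact h1
    exact (integrable_map_measure hf.aestronglyMeasurable hY.aemeasurable).1 h2
  have hX'int : Integrable X' P := hinttr X' hX'm hX' (fun x => x) measurable_id hXint
  have hX''int : Integrable X'' P := hinttr X'' hX''m hX'' (fun x => x) measurable_id hXint
  -- U lands in [0,1] a.s.
  have hUae : ∀ᵐ ω ∂P, U ω ∈ Set.Icc (0:ℝ) 1 := by
    have h2 := Measure.map_apply (μ := P) hUm (measurableSet_Icc (a := (0:ℝ)) (b := 1)).compl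
    rw [hU, Measure.restrict_apply measurableSet_Icc.compl, Set.compl_inter_self] at h2
    rw [ae_iff]
    have h3 : {a | ¬ U a ∈ Set.Icc (0:ℝ) 1} = U ⁻¹' (Set.Icc (0:ℝ) 1)ᶜ := rfl
    rw [h3, ← h2]
    simp
  -- a.e. bounds on the coefficients
  have habc : ∀ᵐ ω ∂P,
      (0 ≤ ((1 - 2*c) * U ω + c)^2 ∧ ((1 - 2*c) * U ω + c)^2 ≤ 1) ∧
      (0 ≤ ((2*c - 1) * U ω + (1 - c))^2 ∧ ((2*c - 1) * U ω + (1 - c))^2 ≤ 1) ∧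
      (0 ≤ (1 - c)/2 * ((U ω)^2 + (1 - U ω)^2) + c * U ω * (1 - U ω) ∧
        (1 - c)/2 * ((U ω)^2 + (1 - U ω)^2) + c * U ω * (1 - U ω) ≤ 1) := by
    filter_upwards [hUae] with ω hu
    obtain ⟨hu0, hu1⟩ := hu
    refine ⟨⟨sq_nonneg _, ?_⟩, ⟨sq_nonneg _, ?_⟩, ⟨?_, ?_⟩⟩
    · nlinarith [mul_nonneg hu0 hc0, mul_nonneg (sub_nonneg.2 hu1) (sub_nonneg.2 hc1),
        mul_nonneg hu0 (sub_nonneg.2 hc1), mul_nonneg hc0 (sub_nonneg.2 hu1),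
        mul_nonneg (mul_nonneg hu0 hc0) (mul_nonneg (sub_nonneg.2 hu1) (sub_nonneg.2 hc1))]
    · nlinarith [mul_nonneg hu0 hc0, mul_nonneg (sub_nonneg.2 hu1) (sub_nonneg.2 hc1),
        mul_nonneg hu0 (sub_nonneg.2 hc1), mul_nonneg hc0 (sub_nonneg.2 hu1),
        mul_nonneg (mul_nonneg hu0 hc0) (mul_nonneg (sub_nonneg.2 hu1) (sub_nonneg.2 hc1))]
    · nlinarith [sq_nonneg (U ω), sq_nonneg (1 - U ω), mul_nonneg hu0 (sub_nonneg.2 hu1),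
        mul_nonneg (mul_nonneg hc0 hu0) (sub_nonneg.2 hu1)]
    · nlinarith [sq_nonneg (U ω), sq_nonneg (1 - U ω), mul_nonneg hu0 (sub_nonneg.2 hu1),
        mul_nonneg (mul_nonneg hc0 hu0) (sub_nonneg.2 hu1),
        mul_nonneg (sub_nonneg.2 hc1) (mul_nonneg hu0 (sub_nonneg.2 hu1))]
  -- integrability of  g(U) * h  when 0 ≤ g(U) ≤ 1  a.e.
  have hintU : ∀ (g : ℝ → ℝ) (h : Ω → ℝ), Measurable g → Measurable h → Integrable h P →
      (∀ᵐ ω ∂P, 0 ≤ g (U ω) ∧ g (U ω) ≤ 1) →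
      Integrable (fun ω => g (U ω) * h ω) P := by
    intro g h hg hh hi hb
    refine Integrable.mono' hi.abs (((hg.comp hUm).mul hh).aestronglyMeasurable) ?_
    filter_upwards [hb] with ω hbω
    rw [Real.norm_eq_abs, abs_mul, abs_of_nonneg hbω.1]
    exact mul_le_of_le_one_left (abs_nonneg _) hbω.2
  -- moments of the coefficient functions
  have hEa : ∫ ω, ((1 - 2*c) * U ω + c)^2 ∂P = 1/3 + (-1/3)*c + (1/3)*c^2 := by
    have h : ∫ ω, ((1 - 2*c) * U ω + c)^2 ∂P
        = ∫ x in Set.Icc (0:ℝ) 1, ((1 - 2*c) * x + c)^2 :=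
      hmomU (fun x => ((1 - 2*c) * x + c)^2) hg1m
    have e : ∀ x : ℝ, ((1 - 2*c) * x + c)^2
        = c^2 + (2*c + (-4)*c^2)*x + (1 + (-4)*c + 4*c^2)*x^2 + 0*x^3 + 0*x^4 := by
      intro x; ring
    rw [h]; simp only [e]; rw [int01]; ring
  have hEb : ∫ ω, ((2*c - 1) * U ω + (1 - c))^2 ∂P = 1/3 + (-1/3)*c + (1/3)*c^2 := by
    have h : ∫ ω, ((2*c - 1) * U ω + (1 - c))^2 ∂P
        = ∫ x in Set.Icc (0:ℝ) 1, ((2*c - 1) * x + (1 - c))^2 :=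
      hmomU (fun x => ((2*c - 1) * x + (1 - c))^2) hg2m
    have e : ∀ x : ℝ, ((2*c - 1) * x + (1 - c))^2
        = (1 + (-2)*c + c^2) + ((-2) + 6*c + (-4)*c^2)*x + (1 + (-4)*c + 4*c^2)*x^2
          + 0*x^3 + 0*x^4 := by
      intro x; ring
    rw [h]; simp only [e]; rw [int01]; ring
  have hEt : ∫ ω, ((1 - c)/2 * ((U ω)^2 + (1 - U ω)^2) + c * U ω * (1 - U ω)) ∂P
      = 1/3 + (-1/6)*c := by
    have h : ∫ ω, ((1 - c)/2 * ((U ω)^2 + (1 - U ω)^2) + c * U ω * (1 - U ω)) ∂P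
        = ∫ x in Set.Icc (0:ℝ) 1, ((1 - c)/2 * (x^2 + (1 - x)^2) + c * x * (1 - x)) :=
      hmomU (fun x => (1 - c)/2 * (x^2 + (1 - x)^2) + c * x * (1 - x)) hg3m
    have e : ∀ x : ℝ, (1 - c)/2 * (x^2 + (1 - x)^2) + c * x * (1 - x)
        = (1/2 + (-1/2)*c) + ((-1) + 2*c)*x + (1 + (-2)*c)*x^2 + 0*x^3 + 0*x^4 := by
      intro x; ring
    rw [h]; simp only [e]; rw [int01]; ring
  -- the mean
  set m : ℝ := ∫ ω, X ω ∂P with hmdef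
  have hX'mean : ∫ ω, X' ω ∂P = m := htrans X' hX'm hX' (fun x => x) measurable_id
  have hX''mean : ∫ ω, X'' ω ∂P = m := htrans X'' hX''m hX'' (fun x => x) measurable_id
  have hFint1 : Integrable (fun ω => ((1 - 2*c) * U ω + c)^2 * X' ω) P :=
    hintU _ X' hg1m hX'm hX'int (by filter_upwards [habc] with ω h using h.1)
  have hFint2 : Integrable (fun ω => ((2*c - 1) * U ω + (1 - c))^2 * X'' ω) P :=
    hintU _ X'' hg2m hX''m hX''int (by filter_upwards [habc] with ω h using h.2.1)
  have hFint3 : Integrable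
      (fun ω => (1 - c)/2 * ((U ω)^2 + (1 - U ω)^2) + c * U ω * (1 - U ω)) P := by
    refine Integrable.mono' (integrable_const 1) ((hg3m.comp hUm)).aestronglyMeasurable ?_
    filter_upwards [habc] with ω h
    rw [Real.norm_eq_abs, abs_of_nonneg h.2.2.1]
    exact h.2.2.2
  have hFint : Integrable F P := by
    rw [hFdef]; exact (hFint1.add hFint2).add hFint3
  have hmean0 : m = ∫ ω, F ω ∂P := by
    have e1 : ∫ y, y ∂(Measure.map X P) = ∫ ω, X ω ∂P :=
      integral_map hXm.aemeasurable aestronglyMeasurable_id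
    have e2 : ∫ y, y ∂(Measure.map F P) = ∫ ω, F ω ∂P :=
      integral_map hFm.aemeasurable aestronglyMeasurable_id
    rw [hmdef, ← e1, ← e2, heq]
  have hsplit : ∫ ω, F ω ∂P = (∫ ω, ((1 - 2*c) * U ω + c)^2 * X' ω ∂P)
      + (∫ ω, ((2*c - 1) * U ω + (1 - c))^2 * X'' ω ∂P)
      + ∫ ω, ((1 - c)/2 * ((U ω)^2 + (1 - U ω)^2) + c * U ω * (1 - U ω)) ∂P := by
    have h12 : Integrable (fun ω => ((1 - 2*c) * U ω + c)^2 * X' ω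
        + ((2*c - 1) * U ω + (1 - c))^2 * X'' ω) P := hFint1.add hFint2
    rw [hFdef]
    simp only []
    rw [integral_add h12 hFint3, integral_add hFint1 hFint2]
  have hIt1 : ∫ ω, ((1 - 2*c) * U ω + c)^2 * X' ω ∂P
      = (1/3 + (-1/3)*c + (1/3)*c^2) * m := by
    have h : ∫ ω, ((1 - 2*c) * U ω + c)^2 * X' ω ∂P
        = (∫ ω, ((1 - 2*c) * U ω + c)^2 ∂P) * ∫ ω, X' ω ∂P :=
      hprodU (fun x => ((1 - 2*c) * x + c)^2) X' hg1m hX'm hIX'U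
    rw [h, hEa, hX'mean]
  have hIt2 : ∫ ω, ((2*c - 1) * U ω + (1 - c))^2 * X'' ω ∂P
      = (1/3 + (-1/3)*c + (1/3)*c^2) * m := by
    have h : ∫ ω, ((2*c - 1) * U ω + (1 - c))^2 * X'' ω ∂P
        = (∫ ω, ((2*c - 1) * U ω + (1 - c))^2 ∂P) * ∫ ω, X'' ω ∂P :=
      hprodU (fun x => ((2*c - 1) * x + (1 - c))^2) X'' hg2m hX''m hIX''U
    rw [h, hEb, hX''mean]
  have heqn : m = (1/3 + (-1/3)*c + (1/3)*c^2) * m + (1/3 + (-1/3)*c + (1/3)*c^2) * m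
      + (1/3 + (-1/6)*c) :=
    hmean0.trans (by rw [hsplit, hIt1, hIt2, hEt])
  have hD1 : (0:ℝ) < 1 + 2*c - 2*c^2 := by nlinarith [mul_nonneg hc0 (sub_nonneg.2 hc1)]
  have hMpoly : 2*(1 + 2*c - 2*c^2) * m = 2 - c := by linear_combination 6 * heqn
  -- ===== finiteness of the second moment via truncation =====
  have hphim : ∀ n : ℕ, Measurable (fun x : ℝ => |x| * min |x| (n:ℝ)) :=
    fun n => measurable_abs.mul (measurable_abs.min measurable_const)
  have hphiint : ∀ (n : ℕ) (Y : Ω → ℝ), Measurable Y → Integrable Y P →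
      Integrable (fun ω => |Y ω| * min |Y ω| (n:ℝ)) P := by
    intro n Y hYm hYi
    refine Integrable.mono' (hYi.abs.const_mul (n:ℝ))
      ((hYm.abs.mul (hYm.abs.min measurable_const)).aestronglyMeasurable) ?_
    filter_upwards with ω
    have h0 : 0 ≤ |Y ω| := abs_nonneg _
    have h1 : (0:ℝ) ≤ min |Y ω| (n:ℝ) := le_min h0 (Nat.cast_nonneg n)
    rw [Real.norm_eq_abs, abs_of_nonneg (mul_nonneg h0 h1)]
    nlinarith [mul_le_mul_of_nonneg_left (min_le_right |Y ω| (n:ℝ)) h0]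
  have hSX' : ∀ n : ℕ, ∫ ω, |X' ω| * min |X' ω| (n:ℝ) ∂P
      = ∫ ω, |X ω| * min |X ω| (n:ℝ) ∂P :=
    fun n => htrans X' hX'm hX' (fun x => |x| * min |x| (n:ℝ)) (hphim n)
  have hSX'' : ∀ n : ℕ, ∫ ω, |X'' ω| * min |X'' ω| (n:ℝ) ∂P
      = ∫ ω, |X ω| * min |X ω| (n:ℝ) ∂P :=
    fun n => htrans X'' hX''m hX'' (fun x => |x| * min |x| (n:ℝ)) (hphim n)
  have habsmean : ∫ ω, |X' ω| ∂P = ∫ ω, |X ω| ∂P :=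
    htrans X' hX'm hX' (fun x => |x|) measurable_abs
  have habsmean' : ∫ ω, |X'' ω| ∂P = ∫ ω, |X ω| ∂P :=
    htrans X'' hX''m hX'' (fun x => |x|) measurable_abs
  have hmulabsint : Integrable (fun ω => |X' ω| * |X'' ω|) P :=
    (hIX'X''.comp measurable_abs measurable_abs).integrable_mul hX'int.abs hX''int.abs
  have hmulabs : ∫ ω, |X' ω| * |X'' ω| ∂P = (∫ ω, |X ω| ∂P) * ∫ ω, |X ω| ∂P := by
    have h : ∫ ω, ((fun ω => |X' ω|) * fun ω => |X'' ω|) ω ∂P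
        = (∫ ω, |X' ω| ∂P) * ∫ ω, |X'' ω| ∂P :=
      (hIX'X''.comp measurable_abs measurable_abs).integral_mul_eq_mul_integral
        hX'm.abs.aestronglyMeasurable hX''m.abs.aestronglyMeasurable
    rw [habsmean, habsmean'] at h
    exact h
  set mA : ℝ := ∫ ω, |X ω| ∂P with hmAdef
  -- the key inequality  S n ≤ (2/3) S n + K
  have hmain : ∀ n : ℕ, ∫ ω, |X ω| * min |X ω| (n:ℝ) ∂P
      ≤ 1/3 * (∫ ω, |X ω| * min |X ω| (n:ℝ) ∂P)
        + 1/3 * (∫ ω, |X ω| * min |X ω| (n:ℝ) ∂P)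
        + (1 + 2*(mA*mA + mA + mA)) := by
    intro n
    have hn0 : (0:ℝ) ≤ (n:ℝ) := Nat.cast_nonneg n
    -- transfer to F
    have e1 : ∫ y, |y| * min |y| (n:ℝ) ∂(Measure.map X P)
        = ∫ ω, |X ω| * min |X ω| (n:ℝ) ∂P :=
      integral_map hXm.aemeasurable (hphim n).aestronglyMeasurable
    have e2 : ∫ y, |y| * min |y| (n:ℝ) ∂(Measure.map F P)
        = ∫ ω, |F ω| * min |F ω| (n:ℝ) ∂P :=
      integral_map hFm.aemeasurable (hphim n).aestronglyMeasurable
    have eq1 : ∫ ω, |X ω| * min |X ω| (n:ℝ) ∂P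
        = ∫ ω, |F ω| * min |F ω| (n:ℝ) ∂P := by rw [← e1, ← e2, heq]
    -- pointwise bound
    have hpt : ∀ᵐ ω ∂P, |F ω| * min |F ω| (n:ℝ) ≤
        ((1 - 2*c) * U ω + c)^2 * (|X' ω| * min |X' ω| (n:ℝ))
        + ((2*c - 1) * U ω + (1 - c))^2 * (|X'' ω| * min |X'' ω| (n:ℝ))
        + (1 + 2*(|X' ω| * |X'' ω| + |X' ω| + |X'' ω|)) := by
      filter_upwards [habc] with ω h
      obtain ⟨⟨ha0, ha1⟩, ⟨hb0, hb1⟩, ⟨ht0, ht1⟩⟩ := h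
      have hx1 : (0:ℝ) ≤ |X' ω| := abs_nonneg _
      have hx2 : (0:ℝ) ≤ |X'' ω| := abs_nonneg _
      have hy1 : (0:ℝ) ≤ ((1 - 2*c) * U ω + c)^2 * |X' ω| := mul_nonneg ha0 hx1
      have hy2 : (0:ℝ) ≤ ((2*c - 1) * U ω + (1 - c))^2 * |X'' ω| := mul_nonneg hb0 hx2
      have h1 : |F ω| ≤ ((1 - 2*c) * U ω + c)^2 * |X' ω|
          + ((2*c - 1) * U ω + (1 - c))^2 * |X'' ω|
          + ((1 - c)/2 * ((U ω)^2 + (1 - U ω)^2) + c * U ω * (1 - U ω)) := by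
        rw [hFapp ω]
        calc |((1 - 2*c) * U ω + c)^2 * X' ω + ((2*c - 1) * U ω + (1 - c))^2 * X'' ω
            + ((1 - c)/2 * ((U ω)^2 + (1 - U ω)^2) + c * U ω * (1 - U ω))|
            ≤ |((1 - 2*c) * U ω + c)^2 * X' ω| + |((2*c - 1) * U ω + (1 - c))^2 * X'' ω|
              + |(1 - c)/2 * ((U ω)^2 + (1 - U ω)^2) + c * U ω * (1 - U ω)| :=
              abs_add_three _ _ _
          _ = ((1 - 2*c) * U ω + c)^2 * |X' ω| + ((2*c - 1) * U ω + (1 - c))^2 * |X'' ω|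
              + ((1 - c)/2 * ((U ω)^2 + (1 - U ω)^2) + c * U ω * (1 - U ω)) := by
              rw [abs_mul, abs_mul, abs_of_nonneg ha0, abs_of_nonneg hb0, abs_of_nonneg ht0]
      have h2 : |F ω| * min |F ω| (n:ℝ)
          ≤ (((1 - 2*c) * U ω + c)^2 * |X' ω| + ((2*c - 1) * U ω + (1 - c))^2 * |X'' ω|
              + ((1 - c)/2 * ((U ω)^2 + (1 - U ω)^2) + c * U ω * (1 - U ω)))
            * min (((1 - 2*c) * U ω + c)^2 * |X' ω|
              + ((2*c - 1) * U ω + (1 - c))^2 * |X'' ω|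
              + ((1 - c)/2 * ((U ω)^2 + (1 - U ω)^2) + c * U ω * (1 - U ω))) (n:ℝ) :=
        mul_le_mul h1 (min_le_min h1 le_rfl) (le_min (abs_nonneg _) hn0)
          (by linarith)
      have h3 := phi_key (n:ℝ)
        (((1 - 2*c) * U ω + c)^2 * |X' ω|)
        (((2*c - 1) * U ω + (1 - c))^2 * |X'' ω|)
        ((1 - c)/2 * ((U ω)^2 + (1 - U ω)^2) + c * U ω * (1 - U ω))
        hy1 hy2 ht0 hn0
      have h4 := phi_scale (((1 - 2*c) * U ω + c)^2) |X' ω| (n:ℝ) ha0 ha1 hx1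
      have h5 := phi_scale (((2*c - 1) * U ω + (1 - c))^2) |X'' ω| (n:ℝ) hb0 hb1 hx2
      have h6 : ((1 - c)/2 * ((U ω)^2 + (1 - U ω)^2) + c * U ω * (1 - U ω))
          * min ((1 - c)/2 * ((U ω)^2 + (1 - U ω)^2) + c * U ω * (1 - U ω)) (n:ℝ) ≤ 1 := by
        refine le_trans (mul_le_mul_of_nonneg_left
          (min_le_left ((1 - c)/2 * ((U ω)^2 + (1 - U ω)^2) + c * U ω * (1 - U ω)) (n:ℝ))
          ht0) (mul_le_one₀ ht1 ht0 ht1)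
      have e1' : ((1 - 2*c) * U ω + c)^2 * |X' ω| ≤ |X' ω| :=
        mul_le_of_le_one_left hx1 ha1
      have e2' : ((2*c - 1) * U ω + (1 - c))^2 * |X'' ω| ≤ |X'' ω| :=
        mul_le_of_le_one_left hx2 hb1
      have h7 : (((1 - 2*c) * U ω + c)^2 * |X' ω|) * (((2*c - 1) * U ω + (1 - c))^2 * |X'' ω|)
          ≤ |X' ω| * |X'' ω| := mul_le_mul e1' e2' hy2 hx1
      have h8 : (((1 - 2*c) * U ω + c)^2 * |X' ω|)
            * ((1 - c)/2 * ((U ω)^2 + (1 - U ω)^2) + c * U ω * (1 - U ω)) ≤ |X' ω| := by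
        linarith [mul_le_mul e1' ht1 ht0 hx1]
      have h9 : (((2*c - 1) * U ω + (1 - c))^2 * |X'' ω|)
            * ((1 - c)/2 * ((U ω)^2 + (1 - U ω)^2) + c * U ω * (1 - U ω)) ≤ |X'' ω| := by
        linarith [mul_le_mul e2' ht1 ht0 hx2]
      have hc1' : ((1 - 2*c) * U ω + c)^2 * (|X' ω| * min |X' ω| (n:ℝ))
          ≤ 1 * (|X' ω| * min |X' ω| (n:ℝ)) :=
        mul_le_mul_of_nonneg_right ha1 (mul_nonneg hx1 (le_min hx1 hn0))
      linarith
    -- integrability of the dominating function pieces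
    have hb1 : Integrable (fun ω => ((1 - 2*c) * U ω + c)^2
        * (|X' ω| * min |X' ω| (n:ℝ))) P :=
      hintU _ _ hg1m ((hX'm.abs.mul (hX'm.abs.min measurable_const)))
        (hphiint n X' hX'm hX'int) (by filter_upwards [habc] with ω h using h.1)
    have hb2 : Integrable (fun ω => ((2*c - 1) * U ω + (1 - c))^2
        * (|X'' ω| * min |X'' ω| (n:ℝ))) P :=
      hintU _ _ hg2m ((hX''m.abs.mul (hX''m.abs.min measurable_const)))
        (hphiint n X'' hX''m hX''int) (by filter_upwards [habc] with ω h using h.2.1)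
    have hb3 : Integrable (fun ω => 1 + 2*(|X' ω| * |X'' ω| + |X' ω| + |X'' ω|)) P :=
      (integrable_const 1).add
        (((hmulabsint.add hX'int.abs).add hX''int.abs).const_mul 2)
    have hb12 : Integrable (fun ω => ((1 - 2*c) * U ω + c)^2 * (|X' ω| * min |X' ω| (n:ℝ))
        + ((2*c - 1) * U ω + (1 - c))^2 * (|X'' ω| * min |X'' ω| (n:ℝ))) P := hb1.add hb2
    have hb123 : Integrable (fun ω => ((1 - 2*c) * U ω + c)^2 * (|X' ω| * min |X' ω| (n:ℝ))
        + ((2*c - 1) * U ω + (1 - c))^2 * (|X'' ω| * min |X'' ω| (n:ℝ))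
        + (1 + 2*(|X' ω| * |X'' ω| + |X' ω| + |X'' ω|))) P := hb12.add hb3
    have hImono := integral_mono_ae (hphiint n F hFm hFint) hb123 hpt
    rw [integral_add hb12 hb3, integral_add hb1 hb2] at hImono
    -- evaluate the three integrals on the right
    have hv1 : ∫ ω, ((1 - 2*c) * U ω + c)^2 * (|X' ω| * min |X' ω| (n:ℝ)) ∂P
        = (1/3 + (-1/3)*c + (1/3)*c^2) * ∫ ω, |X ω| * min |X ω| (n:ℝ) ∂P := by
      have h : ∫ ω, ((1 - 2*c) * U ω + c)^2 * (|X' ω| * min |X' ω| (n:ℝ)) ∂P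
          = (∫ ω, ((1 - 2*c) * U ω + c)^2 ∂P)
            * ∫ ω, |X' ω| * min |X' ω| (n:ℝ) ∂P :=
        hprodU (fun x => ((1 - 2*c) * x + c)^2)
          (fun ω => |X' ω| * min |X' ω| (n:ℝ)) hg1m
          ((hX'm.abs.mul (hX'm.abs.min measurable_const)))
          (hIX'U.comp (hphim n) measurable_id)
      rw [h, hEa, hSX' n]
    have hv2 : ∫ ω, ((2*c - 1) * U ω + (1 - c))^2 * (|X'' ω| * min |X'' ω| (n:ℝ)) ∂P
        = (1/3 + (-1/3)*c + (1/3)*c^2) * ∫ ω, |X ω| * min |X ω| (n:ℝ) ∂P := by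
      have h : ∫ ω, ((2*c - 1) * U ω + (1 - c))^2 * (|X'' ω| * min |X'' ω| (n:ℝ)) ∂P
          = (∫ ω, ((2*c - 1) * U ω + (1 - c))^2 ∂P)
            * ∫ ω, |X'' ω| * min |X'' ω| (n:ℝ) ∂P :=
        hprodU (fun x => ((2*c - 1) * x + (1 - c))^2)
          (fun ω => |X'' ω| * min |X'' ω| (n:ℝ)) hg2m
          ((hX''m.abs.mul (hX''m.abs.min measurable_const)))
          (hIX''U.comp (hphim n) measurable_id)
      rw [h, hEb, hSX'' n]
    have hv3 : ∫ ω, (1 + 2*(|X' ω| * |X'' ω| + |X' ω| + |X'' ω|)) ∂P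
        = 1 + 2*(mA*mA + mA + mA) := by
      have hadd : Integrable (fun ω => |X' ω| * |X'' ω| + |X' ω|) P :=
        hmulabsint.add hX'int.abs
      have hadd2 : Integrable (fun ω => |X' ω| * |X'' ω| + |X' ω| + |X'' ω|) P :=
        (hmulabsint.add hX'int.abs).add hX''int.abs
      have hadd3 : Integrable (fun ω => 2*(|X' ω| * |X'' ω| + |X' ω| + |X'' ω|)) P :=
        hadd2.const_mul 2
      rw [integral_add (integrable_const 1) hadd3,
        MeasureTheory.integral_const_mul, integral_add (hadd) hX''int.abs,
        integral_add hmulabsint hX'int.abs, hmulabs, habsmean, habsmean']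
      simp
    rw [hv1, hv2, hv3] at hImono
    rw [eq1]
    -- now bound the coefficients by 1/3
    have hSnn : 0 ≤ ∫ ω, |X ω| * min |X ω| (n:ℝ) ∂P :=
      integral_nonneg fun ω => mul_nonneg (abs_nonneg _) (le_min (abs_nonneg _) hn0)
    have hco : (1/3 + (-1/3)*c + (1/3)*c^2) ≤ 1/3 := by nlinarith
    nlinarith [mul_le_mul_of_nonneg_right hco hSnn]
  have hbound : ∀ n : ℕ, ∫ ω, |X ω| * min |X ω| (n:ℝ) ∂P
      ≤ 3*(1 + 2*(mA*mA + mA + mA)) := by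
    intro n
    have h := hmain n
    linarith
  -- ===== X has finite second moment =====
  have hsqm : Measurable (fun x : ℝ => x^2) := by fun_prop
  have hmono : Monotone (fun (n:ℕ) (ω:Ω) => ENNReal.ofReal (|X ω| * min |X ω| (n:ℝ))) := by
    intro n n' hnn' ω
    exact ENNReal.ofReal_le_ofReal (mul_le_mul_of_nonneg_left
      (min_le_min le_rfl (by exact_mod_cast hnn')) (abs_nonneg _))
  have hX2int : Integrable (fun ω => X ω^2) P := by
    constructor
    · exact (hXm.pow_const 2).aestronglyMeasurable
    · rw [hasFiniteIntegral_iff_norm]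
      calc ∫⁻ ω, ENNReal.ofReal ‖X ω^2‖ ∂P
          = ∫⁻ ω, ⨆ n : ℕ, ENNReal.ofReal (|X ω| * min |X ω| (n:ℝ)) ∂P := by
            refine lintegral_congr fun ω => ?_
            rw [Real.norm_eq_abs, abs_of_nonneg (sq_nonneg _)]
            exact (phi_sup (X ω)).symm
        _ = ⨆ n : ℕ, ∫⁻ ω, ENNReal.ofReal (|X ω| * min |X ω| (n:ℝ)) ∂P :=
            lintegral_iSup (fun n => ((hphim n).comp hXm).ennreal_ofReal) hmono
        _ ≤ ENNReal.ofReal (3*(1 + 2*(mA*mA + mA + mA))) := by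
            refine iSup_le fun n => ?_
            rw [← ofReal_integral_eq_lintegral_ofReal (hphiint n X hXm hXint)
              (by filter_upwards with ω
                  exact mul_nonneg (abs_nonneg _) (le_min (abs_nonneg _) (Nat.cast_nonneg n)))]
            exact ENNReal.ofReal_le_ofReal (hbound n)
        _ < ⊤ := ENNReal.ofReal_lt_top
  have hMem : MemLp X 2 P := (memLp_two_iff_integrable_sq hXm.aestronglyMeasurable).2 hX2int
  -- ===== second moment equation =====
  set s : ℝ := ∫ ω, X ω^2 ∂P with hsdef
  have hX'2int : Integrable (fun ω => X' ω^2) P :=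
    hinttr X' hX'm hX' (fun x => x^2) hsqm hX2int
  have hX''2int : Integrable (fun ω => X'' ω^2) P :=
    hinttr X'' hX''m hX'' (fun x => x^2) hsqm hX2int
  have hs2X' : ∫ ω, X' ω^2 ∂P = s := htrans X' hX'm hX' (fun x => x^2) hsqm
  have hs2X'' : ∫ ω, X'' ω^2 ∂P = s := htrans X'' hX''m hX'' (fun x => x^2) hsqm
  have hXXint : Integrable (fun ω => X' ω * X'' ω) P :=
    hIX'X''.integrable_mul hX'int hX''int
  have hXXm : Measurable (fun ω => X' ω * X'' ω) := hX'm.mul hX''m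
  have hIXXU : IndepFun (fun ω => X' ω * X'' ω) U P :=
    hIpairU.comp (measurable_fst.mul measurable_snd) measurable_id
  have hXX : ∫ ω, X' ω * X'' ω ∂P = m * m := by
    have h : ∫ ω, (X' * X'') ω ∂P = (∫ ω, X' ω ∂P) * ∫ ω, X'' ω ∂P :=
      hIX'X''.integral_mul_eq_mul_integral hX'm.aestronglyMeasurable hX''m.aestronglyMeasurable
    rw [hX'mean, hX''mean] at h
    exact h
  -- the six coefficient moments
  have hq1m : Measurable (fun x : ℝ => ((1 - 2*c)*x + c)^2 * ((1 - 2*c)*x + c)^2) := by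
    fun_prop
  have hq2m : Measurable (fun x : ℝ =>
      ((2*c - 1)*x + (1 - c))^2 * ((2*c - 1)*x + (1 - c))^2) := by fun_prop
  have hq3m : Measurable (fun x : ℝ =>
      ((1 - 2*c)*x + c)^2 * ((2*c - 1)*x + (1 - c))^2) := by fun_prop
  have hq4m : Measurable (fun x : ℝ =>
      ((1 - 2*c)*x + c)^2 * ((1 - c)/2 * (x^2 + (1 - x)^2) + c * x * (1 - x))) := by fun_prop
  have hq5m : Measurable (fun x : ℝ =>
      ((2*c - 1)*x + (1 - c))^2 * ((1 - c)/2 * (x^2 + (1 - x)^2) + c * x * (1 - x))) := by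
    fun_prop
  have hq6m : Measurable (fun x : ℝ =>
      ((1 - c)/2 * (x^2 + (1 - x)^2) + c * x * (1 - x))
      * ((1 - c)/2 * (x^2 + (1 - x)^2) + c * x * (1 - x))) := by fun_prop
  have hM1 : ∫ ω, ((1 - 2*c)*U ω + c)^2 * ((1 - 2*c)*U ω + c)^2 ∂P
      = 1/5 + (-3/5)*c + (4/5)*c^2 + (-2/5)*c^3 + (1/5)*c^4 := by
    have h : ∫ ω, ((1 - 2*c)*U ω + c)^2 * ((1 - 2*c)*U ω + c)^2 ∂P
        = ∫ x in Set.Icc (0:ℝ) 1, ((1 - 2*c)*x + c)^2 * ((1 - 2*c)*x + c)^2 :=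
      hmomU (fun x => ((1 - 2*c)*x + c)^2 * ((1 - 2*c)*x + c)^2) hq1m
    have e : ∀ x : ℝ, ((1 - 2*c)*x + c)^2 * ((1 - 2*c)*x + c)^2
        = c^4 + (4*c^3 + (-8)*c^4)*x + (6*c^2 + (-24)*c^3 + 24*c^4)*x^2
          + (4*c + (-24)*c^2 + 48*c^3 + (-32)*c^4)*x^3
          + (1 + (-8)*c + 24*c^2 + (-32)*c^3 + 16*c^4)*x^4 := by intro x; ring
    rw [h]; simp only [e]; rw [int01]; ring
  have hM2 : ∫ ω, ((2*c - 1)*U ω + (1 - c))^2 * ((2*c - 1)*U ω + (1 - c))^2 ∂P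
      = 1/5 + (-3/5)*c + (4/5)*c^2 + (-2/5)*c^3 + (1/5)*c^4 := by
    have h : ∫ ω, ((2*c - 1)*U ω + (1 - c))^2 * ((2*c - 1)*U ω + (1 - c))^2 ∂P
        = ∫ x in Set.Icc (0:ℝ) 1, ((2*c - 1)*x + (1 - c))^2 * ((2*c - 1)*x + (1 - c))^2 :=
      hmomU (fun x => ((2*c - 1)*x + (1 - c))^2 * ((2*c - 1)*x + (1 - c))^2) hq2m
    have e : ∀ x : ℝ, ((2*c - 1)*x + (1 - c))^2 * ((2*c - 1)*x + (1 - c))^2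
        = (1 + (-4)*c + 6*c^2 + (-4)*c^3 + c^4)
          + ((-4) + 20*c + (-36)*c^2 + 28*c^3 + (-8)*c^4)*x
          + (6 + (-36)*c + 78*c^2 + (-72)*c^3 + 24*c^4)*x^2
          + ((-4) + 28*c + (-72)*c^2 + 80*c^3 + (-32)*c^4)*x^3
          + (1 + (-8)*c + 24*c^2 + (-32)*c^3 + 16*c^4)*x^4 := by intro x; ring
    rw [h]; simp only [e]; rw [int01]; ring
  have hM3 : ∫ ω, ((1 - 2*c)*U ω + c)^2 * ((2*c - 1)*U ω + (1 - c))^2 ∂P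
      = 1/30 + (1/15)*c + (2/15)*c^2 + (-2/5)*c^3 + (1/5)*c^4 := by
    have h : ∫ ω, ((1 - 2*c)*U ω + c)^2 * ((2*c - 1)*U ω + (1 - c))^2 ∂P
        = ∫ x in Set.Icc (0:ℝ) 1, ((1 - 2*c)*x + c)^2 * ((2*c - 1)*x + (1 - c))^2 :=
      hmomU (fun x => ((1 - 2*c)*x + c)^2 * ((2*c - 1)*x + (1 - c))^2) hq3m
    have e : ∀ x : ℝ, ((1 - 2*c)*x + c)^2 * ((2*c - 1)*x + (1 - c))^2
        = (c^2 + (-2)*c^3 + c^4)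
          + (2*c + (-10)*c^2 + 16*c^3 + (-8)*c^4)*x
          + (1 + (-10)*c + 34*c^2 + (-48)*c^3 + 24*c^4)*x^2
          + ((-2) + 16*c + (-48)*c^2 + 64*c^3 + (-32)*c^4)*x^3
          + (1 + (-8)*c + 24*c^2 + (-32)*c^3 + 16*c^4)*x^4 := by intro x; ring
    rw [h]; simp only [e]; rw [int01]; ring
  have hM4 : ∫ ω, ((1 - 2*c)*U ω + c)^2
        * ((1 - c)/2 * ((U ω)^2 + (1 - U ω)^2) + c * U ω * (1 - U ω)) ∂P
      = 7/60 + (-1/5)*c + (7/30)*c^2 + (-1/10)*c^3 := by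
    have h : ∫ ω, ((1 - 2*c)*U ω + c)^2
          * ((1 - c)/2 * ((U ω)^2 + (1 - U ω)^2) + c * U ω * (1 - U ω)) ∂P
        = ∫ x in Set.Icc (0:ℝ) 1, ((1 - 2*c)*x + c)^2
          * ((1 - c)/2 * (x^2 + (1 - x)^2) + c * x * (1 - x)) :=
      hmomU (fun x => ((1 - 2*c)*x + c)^2
        * ((1 - c)/2 * (x^2 + (1 - x)^2) + c * x * (1 - x))) hq4m
    have e : ∀ x : ℝ, ((1 - 2*c)*x + c)^2
          * ((1 - c)/2 * (x^2 + (1 - x)^2) + c * x * (1 - x))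
        = ((1/2)*c^2 + (-1/2)*c^3)
          + (c + (-4)*c^2 + 4*c^3)*x
          + (1/2 + (-9/2)*c + 13*c^2 + (-12)*c^3)*x^2
          + ((-1) + 8*c + (-20)*c^2 + 16*c^3)*x^3
          + (1 + (-6)*c + 12*c^2 + (-8)*c^3)*x^4 := by intro x; ring
    rw [h]; simp only [e]; rw [int01]; ring
  have hM5 : ∫ ω, ((2*c - 1)*U ω + (1 - c))^2
        * ((1 - c)/2 * ((U ω)^2 + (1 - U ω)^2) + c * U ω * (1 - U ω)) ∂P
      = 7/60 + (-1/5)*c + (7/30)*c^2 + (-1/10)*c^3 := by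
    have h : ∫ ω, ((2*c - 1)*U ω + (1 - c))^2
          * ((1 - c)/2 * ((U ω)^2 + (1 - U ω)^2) + c * U ω * (1 - U ω)) ∂P
        = ∫ x in Set.Icc (0:ℝ) 1, ((2*c - 1)*x + (1 - c))^2
          * ((1 - c)/2 * (x^2 + (1 - x)^2) + c * x * (1 - x)) :=
      hmomU (fun x => ((2*c - 1)*x + (1 - c))^2
        * ((1 - c)/2 * (x^2 + (1 - x)^2) + c * x * (1 - x))) hq5m
    have e : ∀ x : ℝ, ((2*c - 1)*x + (1 - c))^2
          * ((1 - c)/2 * (x^2 + (1 - x)^2) + c * x * (1 - x))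
        = (1/2 + (-3/2)*c + (3/2)*c^2 + (-1/2)*c^3)
          + ((-2) + 8*c + (-10)*c^2 + 4*c^3)*x
          + (7/2 + (-33/2)*c + 25*c^2 + (-12)*c^3)*x^2
          + ((-3) + 16*c + (-28)*c^2 + 16*c^3)*x^3
          + (1 + (-6)*c + 12*c^2 + (-8)*c^3)*x^4 := by intro x; ring
    rw [h]; simp only [e]; rw [int01]; ring
  have hM6 : ∫ ω, ((1 - c)/2 * ((U ω)^2 + (1 - U ω)^2) + c * U ω * (1 - U ω))
        * ((1 - c)/2 * ((U ω)^2 + (1 - U ω)^2) + c * U ω * (1 - U ω)) ∂P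
      = 7/60 + (-2/15)*c + (1/20)*c^2 := by
    have h : ∫ ω, ((1 - c)/2 * ((U ω)^2 + (1 - U ω)^2) + c * U ω * (1 - U ω))
          * ((1 - c)/2 * ((U ω)^2 + (1 - U ω)^2) + c * U ω * (1 - U ω)) ∂P
        = ∫ x in Set.Icc (0:ℝ) 1, ((1 - c)/2 * (x^2 + (1 - x)^2) + c * x * (1 - x))
          * ((1 - c)/2 * (x^2 + (1 - x)^2) + c * x * (1 - x)) :=
      hmomU (fun x => ((1 - c)/2 * (x^2 + (1 - x)^2) + c * x * (1 - x))
        * ((1 - c)/2 * (x^2 + (1 - x)^2) + c * x * (1 - x))) hq6m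
    have e : ∀ x : ℝ, ((1 - c)/2 * (x^2 + (1 - x)^2) + c * x * (1 - x))
          * ((1 - c)/2 * (x^2 + (1 - x)^2) + c * x * (1 - x))
        = (1/4 + (-1/2)*c + (1/4)*c^2)
          + ((-1) + 3*c + (-2)*c^2)*x
          + (2 + (-7)*c + 6*c^2)*x^2
          + ((-2) + 8*c + (-8)*c^2)*x^3
          + (1 + (-4)*c + 4*c^2)*x^4 := by intro x; ring
    rw [h]; simp only [e]; rw [int01]; ring
  -- transfer s to F and expand
  have hs0 : s = ∫ ω, F ω^2 ∂P := by
    have f1 : ∫ y, y^2 ∂(Measure.map X P) = ∫ ω, X ω^2 ∂P :=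
      integral_map hXm.aemeasurable hsqm.aestronglyMeasurable
    have f2 : ∫ y, y^2 ∂(Measure.map F P) = ∫ ω, F ω^2 ∂P :=
      integral_map hFm.aemeasurable hsqm.aestronglyMeasurable
    rw [hsdef, ← f1, ← f2, heq]
  have hFsq : ∀ ω, F ω^2
      = (((1 - 2*c)*U ω + c)^2 * ((1 - 2*c)*U ω + c)^2) * X' ω^2
        + (((2*c - 1)*U ω + (1 - c))^2 * ((2*c - 1)*U ω + (1 - c))^2) * X'' ω^2
        + 2*((((1 - 2*c)*U ω + c)^2 * ((2*c - 1)*U ω + (1 - c))^2) * (X' ω * X'' ω))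
        + 2*((((1 - 2*c)*U ω + c)^2
            * ((1 - c)/2 * ((U ω)^2 + (1 - U ω)^2) + c * U ω * (1 - U ω))) * X' ω)
        + 2*((((2*c - 1)*U ω + (1 - c))^2
            * ((1 - c)/2 * ((U ω)^2 + (1 - U ω)^2) + c * U ω * (1 - U ω))) * X'' ω)
        + (((1 - c)/2 * ((U ω)^2 + (1 - U ω)^2) + c * U ω * (1 - U ω))
            * ((1 - c)/2 * ((U ω)^2 + (1 - U ω)^2) + c * U ω * (1 - U ω))) := by
    intro ω
    rw [hFapp ω]
    ring
  -- a.e. bounds for products of the coefficient functions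
  have habc2 : ∀ᵐ ω ∂P,
      (0 ≤ ((1 - 2*c)*U ω + c)^2 * ((1 - 2*c)*U ω + c)^2 ∧
        ((1 - 2*c)*U ω + c)^2 * ((1 - 2*c)*U ω + c)^2 ≤ 1) ∧
      (0 ≤ ((2*c - 1)*U ω + (1 - c))^2 * ((2*c - 1)*U ω + (1 - c))^2 ∧
        ((2*c - 1)*U ω + (1 - c))^2 * ((2*c - 1)*U ω + (1 - c))^2 ≤ 1) ∧
      (0 ≤ ((1 - 2*c)*U ω + c)^2 * ((2*c - 1)*U ω + (1 - c))^2 ∧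
        ((1 - 2*c)*U ω + c)^2 * ((2*c - 1)*U ω + (1 - c))^2 ≤ 1) ∧
      (0 ≤ ((1 - 2*c)*U ω + c)^2
          * ((1 - c)/2 * ((U ω)^2 + (1 - U ω)^2) + c * U ω * (1 - U ω)) ∧
        ((1 - 2*c)*U ω + c)^2
          * ((1 - c)/2 * ((U ω)^2 + (1 - U ω)^2) + c * U ω * (1 - U ω)) ≤ 1) ∧
      (0 ≤ ((2*c - 1)*U ω + (1 - c))^2
          * ((1 - c)/2 * ((U ω)^2 + (1 - U ω)^2) + c * U ω * (1 - U ω)) ∧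
        ((2*c - 1)*U ω + (1 - c))^2
          * ((1 - c)/2 * ((U ω)^2 + (1 - U ω)^2) + c * U ω * (1 - U ω)) ≤ 1) := by
    filter_upwards [habc] with ω h
    obtain ⟨⟨ha0, ha1⟩, ⟨hb0, hb1⟩, ⟨ht0, ht1⟩⟩ := h
    exact ⟨⟨mul_nonneg ha0 ha0, mul_le_one₀ ha1 ha0 ha1⟩,
      ⟨mul_nonneg hb0 hb0, mul_le_one₀ hb1 hb0 hb1⟩,
      ⟨mul_nonneg ha0 hb0, mul_le_one₀ ha1 hb0 hb1⟩,
      ⟨mul_nonneg ha0 ht0, mul_le_one₀ ha1 ht0 ht1⟩,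
      ⟨mul_nonneg hb0 ht0, mul_le_one₀ hb1 ht0 ht1⟩⟩
  -- integrability of the six terms
  have j1 : Integrable (fun ω =>
      (((1 - 2*c)*U ω + c)^2 * ((1 - 2*c)*U ω + c)^2) * X' ω^2) P :=
    hintU _ _ hq1m (hX'm.pow_const 2) hX'2int
      (by filter_upwards [habc2] with ω h using h.1)
  have j2 : Integrable (fun ω =>
      (((2*c - 1)*U ω + (1 - c))^2 * ((2*c - 1)*U ω + (1 - c))^2) * X'' ω^2) P :=
    hintU _ _ hq2m (hX''m.pow_const 2) hX''2int
      (by filter_upwards [habc2] with ω h using h.2.1)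
  have j3 : Integrable (fun ω =>
      2*((((1 - 2*c)*U ω + c)^2 * ((2*c - 1)*U ω + (1 - c))^2) * (X' ω * X'' ω))) P :=
    (hintU _ _ hq3m hXXm hXXint
      (by filter_upwards [habc2] with ω h using h.2.2.1)).const_mul 2
  have j4 : Integrable (fun ω =>
      2*((((1 - 2*c)*U ω + c)^2
        * ((1 - c)/2 * ((U ω)^2 + (1 - U ω)^2) + c * U ω * (1 - U ω))) * X' ω)) P :=
    (hintU _ _ hq4m hX'm hX'int
      (by filter_upwards [habc2] with ω h using h.2.2.2.1)).const_mul 2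
  have j5 : Integrable (fun ω =>
      2*((((2*c - 1)*U ω + (1 - c))^2
        * ((1 - c)/2 * ((U ω)^2 + (1 - U ω)^2) + c * U ω * (1 - U ω))) * X'' ω)) P :=
    (hintU _ _ hq5m hX''m hX''int
      (by filter_upwards [habc2] with ω h using h.2.2.2.2)).const_mul 2
  have j6 : Integrable (fun ω =>
      ((1 - c)/2 * ((U ω)^2 + (1 - U ω)^2) + c * U ω * (1 - U ω))
      * ((1 - c)/2 * ((U ω)^2 + (1 - U ω)^2) + c * U ω * (1 - U ω))) P := by
    refine Integrable.mono' (integrable_const 1) ((hq6m.comp hUm)).aestronglyMeasurable ?_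
    filter_upwards [habc] with ω h
    rw [Real.norm_eq_abs, abs_of_nonneg (mul_nonneg h.2.2.1 h.2.2.1)]
    exact mul_le_one₀ h.2.2.2 h.2.2.1 h.2.2.2
  -- abbreviations for the six integrands
  have j12 : Integrable (fun ω =>
      (((1 - 2*c)*U ω + c)^2 * ((1 - 2*c)*U ω + c)^2) * X' ω^2
      + (((2*c - 1)*U ω + (1 - c))^2 * ((2*c - 1)*U ω + (1 - c))^2) * X'' ω^2) P :=
    j1.add j2
  have j123 : Integrable (fun ω =>
      (((1 - 2*c)*U ω + c)^2 * ((1 - 2*c)*U ω + c)^2) * X' ω^2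
      + (((2*c - 1)*U ω + (1 - c))^2 * ((2*c - 1)*U ω + (1 - c))^2) * X'' ω^2
      + 2*((((1 - 2*c)*U ω + c)^2 * ((2*c - 1)*U ω + (1 - c))^2) * (X' ω * X'' ω))) P :=
    j12.add j3
  have j1234 : Integrable (fun ω =>
      (((1 - 2*c)*U ω + c)^2 * ((1 - 2*c)*U ω + c)^2) * X' ω^2
      + (((2*c - 1)*U ω + (1 - c))^2 * ((2*c - 1)*U ω + (1 - c))^2) * X'' ω^2
      + 2*((((1 - 2*c)*U ω + c)^2 * ((2*c - 1)*U ω + (1 - c))^2) * (X' ω * X'' ω))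
      + 2*((((1 - 2*c)*U ω + c)^2
          * ((1 - c)/2 * ((U ω)^2 + (1 - U ω)^2) + c * U ω * (1 - U ω))) * X' ω)) P :=
    j123.add j4
  have j12345 : Integrable (fun ω =>
      (((1 - 2*c)*U ω + c)^2 * ((1 - 2*c)*U ω + c)^2) * X' ω^2
      + (((2*c - 1)*U ω + (1 - c))^2 * ((2*c - 1)*U ω + (1 - c))^2) * X'' ω^2
      + 2*((((1 - 2*c)*U ω + c)^2 * ((2*c - 1)*U ω + (1 - c))^2) * (X' ω * X'' ω))
      + 2*((((1 - 2*c)*U ω + c)^2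
          * ((1 - c)/2 * ((U ω)^2 + (1 - U ω)^2) + c * U ω * (1 - U ω))) * X' ω)
      + 2*((((2*c - 1)*U ω + (1 - c))^2
          * ((1 - c)/2 * ((U ω)^2 + (1 - U ω)^2) + c * U ω * (1 - U ω))) * X'' ω)) P :=
    j1234.add j5
  have hsplit2 : ∫ ω, F ω^2 ∂P =
      (∫ ω, (((1 - 2*c)*U ω + c)^2 * ((1 - 2*c)*U ω + c)^2) * X' ω^2 ∂P)
      + (∫ ω, (((2*c - 1)*U ω + (1 - c))^2 * ((2*c - 1)*U ω + (1 - c))^2) * X'' ω^2 ∂P)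
      + (∫ ω, 2*((((1 - 2*c)*U ω + c)^2 * ((2*c - 1)*U ω + (1 - c))^2)
          * (X' ω * X'' ω)) ∂P)
      + (∫ ω, 2*((((1 - 2*c)*U ω + c)^2
          * ((1 - c)/2 * ((U ω)^2 + (1 - U ω)^2) + c * U ω * (1 - U ω))) * X' ω) ∂P)
      + (∫ ω, 2*((((2*c - 1)*U ω + (1 - c))^2
          * ((1 - c)/2 * ((U ω)^2 + (1 - U ω)^2) + c * U ω * (1 - U ω))) * X'' ω) ∂P)
      + ∫ ω, ((1 - c)/2 * ((U ω)^2 + (1 - U ω)^2) + c * U ω * (1 - U ω))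
          * ((1 - c)/2 * ((U ω)^2 + (1 - U ω)^2) + c * U ω * (1 - U ω)) ∂P := by
    simp only [hFsq]
    rw [integral_add j12345 j6, integral_add j1234 j5, integral_add j123 j4,
      integral_add j12 j3, integral_add j1 j2]
  -- evaluate the six integrals
  have hw1 : ∫ ω, (((1 - 2*c)*U ω + c)^2 * ((1 - 2*c)*U ω + c)^2) * X' ω^2 ∂P
      = (1/5 + (-3/5)*c + (4/5)*c^2 + (-2/5)*c^3 + (1/5)*c^4) * s := by
    have h : ∫ ω, (((1 - 2*c)*U ω + c)^2 * ((1 - 2*c)*U ω + c)^2) * X' ω^2 ∂P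
        = (∫ ω, ((1 - 2*c)*U ω + c)^2 * ((1 - 2*c)*U ω + c)^2 ∂P) * ∫ ω, X' ω^2 ∂P :=
      hprodU (fun x => ((1 - 2*c)*x + c)^2 * ((1 - 2*c)*x + c)^2)
        (fun ω => X' ω^2) hq1m (hX'm.pow_const 2) (hIX'U.comp hsqm measurable_id)
    rw [h, hM1, hs2X']
  have hw2 : ∫ ω, (((2*c - 1)*U ω + (1 - c))^2 * ((2*c - 1)*U ω + (1 - c))^2) * X'' ω^2 ∂P
      = (1/5 + (-3/5)*c + (4/5)*c^2 + (-2/5)*c^3 + (1/5)*c^4) * s := by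
    have h : ∫ ω, (((2*c - 1)*U ω + (1 - c))^2 * ((2*c - 1)*U ω + (1 - c))^2) * X'' ω^2 ∂P
        = (∫ ω, ((2*c - 1)*U ω + (1 - c))^2 * ((2*c - 1)*U ω + (1 - c))^2 ∂P)
          * ∫ ω, X'' ω^2 ∂P :=
      hprodU (fun x => ((2*c - 1)*x + (1 - c))^2 * ((2*c - 1)*x + (1 - c))^2)
        (fun ω => X'' ω^2) hq2m (hX''m.pow_const 2) (hIX''U.comp hsqm measurable_id)
    rw [h, hM2, hs2X'']
  have hw3 : ∫ ω, 2*((((1 - 2*c)*U ω + c)^2 * ((2*c - 1)*U ω + (1 - c))^2)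
        * (X' ω * X'' ω)) ∂P
      = 2*((1/30 + (1/15)*c + (2/15)*c^2 + (-2/5)*c^3 + (1/5)*c^4) * (m*m)) := by
    rw [MeasureTheory.integral_const_mul]
    have h : ∫ ω, (((1 - 2*c)*U ω + c)^2 * ((2*c - 1)*U ω + (1 - c))^2)
          * (X' ω * X'' ω) ∂P
        = (∫ ω, ((1 - 2*c)*U ω + c)^2 * ((2*c - 1)*U ω + (1 - c))^2 ∂P)
          * ∫ ω, X' ω * X'' ω ∂P :=
      hprodU (fun x => ((1 - 2*c)*x + c)^2 * ((2*c - 1)*x + (1 - c))^2)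
        (fun ω => X' ω * X'' ω) hq3m hXXm hIXXU
    rw [h, hM3, hXX]
  have hw4 : ∫ ω, 2*((((1 - 2*c)*U ω + c)^2
        * ((1 - c)/2 * ((U ω)^2 + (1 - U ω)^2) + c * U ω * (1 - U ω))) * X' ω) ∂P
      = 2*((7/60 + (-1/5)*c + (7/30)*c^2 + (-1/10)*c^3) * m) := by
    rw [MeasureTheory.integral_const_mul]
    have h : ∫ ω, (((1 - 2*c)*U ω + c)^2
          * ((1 - c)/2 * ((U ω)^2 + (1 - U ω)^2) + c * U ω * (1 - U ω))) * X' ω ∂P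
        = (∫ ω, ((1 - 2*c)*U ω + c)^2
            * ((1 - c)/2 * ((U ω)^2 + (1 - U ω)^2) + c * U ω * (1 - U ω)) ∂P)
          * ∫ ω, X' ω ∂P :=
      hprodU (fun x => ((1 - 2*c)*x + c)^2
        * ((1 - c)/2 * (x^2 + (1 - x)^2) + c * x * (1 - x))) X' hq4m hX'm hIX'U
    rw [h, hM4, hX'mean]
  have hw5 : ∫ ω, 2*((((2*c - 1)*U ω + (1 - c))^2
        * ((1 - c)/2 * ((U ω)^2 + (1 - U ω)^2) + c * U ω * (1 - U ω))) * X'' ω) ∂P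
      = 2*((7/60 + (-1/5)*c + (7/30)*c^2 + (-1/10)*c^3) * m) := by
    rw [MeasureTheory.integral_const_mul]
    have h : ∫ ω, (((2*c - 1)*U ω + (1 - c))^2
          * ((1 - c)/2 * ((U ω)^2 + (1 - U ω)^2) + c * U ω * (1 - U ω))) * X'' ω ∂P
        = (∫ ω, ((2*c - 1)*U ω + (1 - c))^2
            * ((1 - c)/2 * ((U ω)^2 + (1 - U ω)^2) + c * U ω * (1 - U ω)) ∂P)
          * ∫ ω, X'' ω ∂P :=
      hprodU (fun x => ((2*c - 1)*x + (1 - c))^2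
        * ((1 - c)/2 * (x^2 + (1 - x)^2) + c * x * (1 - x))) X'' hq5m hX''m hIX''U
    rw [h, hM5, hX''mean]
  have hseqn2 : s = (1/5 + (-3/5)*c + (4/5)*c^2 + (-2/5)*c^3 + (1/5)*c^4) * s
      + (1/5 + (-3/5)*c + (4/5)*c^2 + (-2/5)*c^3 + (1/5)*c^4) * s
      + 2*((1/30 + (1/15)*c + (2/15)*c^2 + (-2/5)*c^3 + (1/5)*c^4) * (m*m))
      + 2*((7/60 + (-1/5)*c + (7/30)*c^2 + (-1/10)*c^3) * m)
      + 2*((7/60 + (-1/5)*c + (7/30)*c^2 + (-1/10)*c^3) * m)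
      + (7/60 + (-2/15)*c + (1/20)*c^2) :=
    hs0.trans (by rw [hsplit2, hw1, hw2, hw3, hw4, hw5, hM6])
  -- ===== conclusion =====
  have hD2 : (0:ℝ) < 3 + 6*c - 8*c^2 + 4*c^3 - 2*c^4 := by
    have e : 3 + 6*c - 8*c^2 + 4*c^3 - 2*c^4
        = 1 + 2*((1-c)*(1+4*c)) + 2*(c^3*(2-c)) := by ring
    have h1 : 0 ≤ (1-c)*(1+4*c) := mul_nonneg (by linarith) (by linarith)
    have h2 : 0 ≤ c^3*(2-c) := mul_nonneg (pow_nonneg hc0 3) (by linarith)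
    linarith [e, h1, h2]
  constructor
  · rw [eq_div_iff (mul_pos two_pos hD1).ne']
    linear_combination 6 * heqn
  · rw [variance_eq_sub hMem]
    simp only [Pi.pow_apply]
    rw [← hmdef, ← hsdef]
    have hDne : 4 * (1 + 2*c - 2*c^2)^2 * (3 + 6*c - 8*c^2 + 4*c^3 - 2*c^4) ≠ 0 :=
      (mul_pos (mul_pos (by norm_num : (0:ℝ) < 4) (pow_pos hD1 2)) hD2).ne'
    rw [eq_div_iff hDne]
    linear_combination (20 + 80*c - 160*c^3 + 80*c^4) * hseqn2
      + ((-2/3) + (-16/3)*m + (-20/3)*c + (-64/3)*c*m + 8*c^2 + 8*c^2*m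
        + (16/3)*c^3 + (128/3)*c^3*m + (-32/3)*c^4 + (-184/3)*c^4*m
        + 4*c^5 + 48*c^5*m + (-16)*c^6*m) * hMpoly
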